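/- Let n be a positive integer, let P be an n×n Hermitian positive definite complex matrix, let Ω be a finite index set, and for each i ∈ Ω let c_i ∈ ℂⁿ be a vector and σ_i > 0 a positive real weight. For a subset X ⊆ Ω define Λ_X = ∑_{i∈X} σ_i c_i c_i* and f_D(X) = log det((P + Λ_X)⁻¹). Then f_D is supermodular: for every element a ∈ Ω and all subsets X ⊆ Y ⊆ Ω \ {a}, f_D(Y ∪ {a}) − f_D(Y) ≥ f_D(X ∪ {a}) − f_D(X). -/

import Mathlib

open Matrix BigOperators
open scoped ComplexOrder

/-- Supermodularity of the D-optimal metric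
`f_D(X) = log det((P + Λ_X)⁻¹)`, where `Λ_X = ∑_{i ∈ X} σ_i c_i c_i*` and `P`
is Hermitian positive definite: for every `a ∈ Ω` and subsets
`X ⊆ Y ⊆ Ω \ {a}`, `f_D(Y ∪ {a}) − f_D(Y) ≥ f_D(X ∪ {a}) − f_D(X)`. -/
private lemma psd_term {n : ℕ} (v : Fin n → ℂ) {r : ℝ} (hr : 0 ≤ r) :
    ((r : ℂ) • vecMulVec v (star v)).PosSemidef := by
  refine Matrix.PosSemidef.of_dotProduct_mulVec_nonneg ?_ ?_
  · ext i j
    simp [conjTranspose_apply, vecMulVec_apply, mul_comm, Complex.conj_ofReal]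
  · intro x
    have hmv : ((r : ℂ) • vecMulVec v (star v)) *ᵥ x
        = ((r : ℂ) * (star v ⬝ᵥ x)) • v := by
      ext i
      simp only [mulVec, dotProduct, vecMulVec_apply, Matrix.smul_apply, Pi.smul_apply,
        smul_eq_mul, Finset.mul_sum]
      rw [Finset.sum_mul]
      exact Finset.sum_congr rfl fun j _ => by ring
    rw [hmv]
    have : star x ⬝ᵥ (((r : ℂ) * (star v ⬝ᵥ x)) • v)
        = (r : ℂ) * ((star v ⬝ᵥ x) * (star x ⬝ᵥ v)) := by
      simp [dotProduct_smul, smul_eq_mul]; ring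
    rw [this, star_dotProduct x v]
    rw [show star (star v ⬝ᵥ x) = (starRingEnd ℂ) (star v ⬝ᵥ x) from rfl,
      Complex.mul_conj, ← Complex.ofReal_mul, Complex.zero_le_real]
    exact mul_nonneg hr (Complex.normSq_nonneg _)

private lemma psd_re_nonneg {n : ℕ} {B : Matrix (Fin n) (Fin n) ℂ} (hB : B.PosSemidef)
    (x : Fin n → ℂ) : 0 ≤ (star x ⬝ᵥ B *ᵥ x).re :=
  (Complex.le_def.mp (hB.dotProduct_mulVec_nonneg x)).1

private lemma psd_im_zero {n : ℕ} {B : Matrix (Fin n) (Fin n) ℂ} (hB : B.PosSemidef)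
    (x : Fin n → ℂ) : (star x ⬝ᵥ B *ᵥ x).im = 0 :=
  ((Complex.le_def.mp (hB.dotProduct_mulVec_nonneg x)).2).symm

private lemma quad_anti {n : ℕ} {A D : Matrix (Fin n) (Fin n) ℂ}
    (hA : A.PosDef) (hD : D.PosSemidef) (v : Fin n → ℂ) :
    (star v ⬝ᵥ (A + D)⁻¹ *ᵥ v).re ≤ (star v ⬝ᵥ A⁻¹ *ᵥ v).re := by
  have hM : (A + D).PosDef := hA.add_posSemidef hD
  set y := (A + D)⁻¹ *ᵥ v with hy
  set w := A⁻¹ *ᵥ v with hw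
  have hMy : (A + D) *ᵥ y = v := by
    rw [hy, mulVec_mulVec, mul_nonsing_inv _ hM.det_pos.ne'.isUnit, one_mulVec]
  have hAw : A *ᵥ w = v := by
    rw [hw, mulVec_mulVec, mul_nonsing_inv _ hA.det_pos.ne'.isUnit, one_mulVec]
  -- star w ⬝ᵥ A *ᵥ y = star v ⬝ᵥ y
  have h1 : star w ⬝ᵥ A *ᵥ y = star v ⬝ᵥ y := by
    rw [dotProduct_mulVec]
    nth_rewrite 1 [← hA.isHermitian.eq]
    rw [← star_mulVec, hAw]
  -- (star y ⬝ᵥ v).re = (star v ⬝ᵥ y).re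
  have h2 : (star y ⬝ᵥ v).re = (star v ⬝ᵥ y).re := by
    rw [star_dotProduct]; exact (Complex.conj_re _)
  have h3 : (star w ⬝ᵥ v).re = (star v ⬝ᵥ w).re := by
    rw [star_dotProduct]; exact (Complex.conj_re _)
  -- (star y ⬝ᵥ A *ᵥ y).re ≤ (star v ⬝ᵥ y).re
  have h5 : (star y ⬝ᵥ A *ᵥ y).re ≤ (star v ⬝ᵥ y).re := by
    have hs : star y ⬝ᵥ v = star y ⬝ᵥ A *ᵥ y + star y ⬝ᵥ D *ᵥ y := by
      rw [← hMy, add_mulVec, dotProduct_add]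
    have hsplit : (star v ⬝ᵥ y).re = (star y ⬝ᵥ A *ᵥ y).re + (star y ⬝ᵥ D *ᵥ y).re := by
      rw [← h2, hs, Complex.add_re]
    have := psd_re_nonneg hD y
    linarith
  -- expansion
  have hexp : star (y - w) ⬝ᵥ A *ᵥ (y - w)
      = star y ⬝ᵥ A *ᵥ y - star y ⬝ᵥ v - star v ⬝ᵥ y + star w ⬝ᵥ v := by
    rw [star_sub, sub_dotProduct, mulVec_sub, dotProduct_sub, dotProduct_sub, hAw, h1]
    ring
  have hpos : 0 ≤ (star (y - w) ⬝ᵥ A *ᵥ (y - w)).re := psd_re_nonneg hA.posSemidef _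
  rw [hexp] at hpos
  simp only [Complex.add_re, Complex.sub_re] at hpos
  linarith

private lemma det_re_add_rankone {n : ℕ} {A : Matrix (Fin n) (Fin n) ℂ} (hA : A.PosDef)
    (v : Fin n → ℂ) (r : ℝ) :
    ((A + (r : ℂ) • vecMulVec v (star v)).det).re
      = A.det.re * (1 + r * (star v ⬝ᵥ A⁻¹ *ᵥ v).re) := by
  have hsm : (r : ℂ) • vecMulVec v (star v)
      = replicateCol Unit ((r : ℂ) • v) * replicateRow Unit (star v) := by
    rw [← vecMulVec_eq]
    ext i j
    simp [vecMulVec_apply, smul_eq_mul]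
    ring
  have hdet : (A + (r : ℂ) • vecMulVec v (star v)).det
      = A.det * (1 + (r : ℂ) * (star v ⬝ᵥ A⁻¹ *ᵥ v)) := by
    rw [hsm, det_add_replicateCol_mul_replicateRow hA.det_pos.ne'.isUnit]
    congr 1
    rw [det_unique]
    simp only [Matrix.add_apply, one_apply_eq, mul_apply, replicateRow_apply, replicateCol_apply, Finset.univ_unique,
      Finset.sum_singleton]
    simp only [dotProduct, mulVec, Finset.mul_sum, Finset.sum_mul, Pi.smul_apply, smul_eq_mul]
    congr 1
    rw [Finset.sum_comm]
    exact Finset.sum_congr rfl fun i _ => Finset.sum_congr rfl fun j _ => by ring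
  have him : (star v ⬝ᵥ A⁻¹ *ᵥ v).im = 0 := psd_im_zero hA.inv.posSemidef v
  have hdim : A.det.im = 0 := by
    have := hA.det_pos
    rw [Complex.lt_def] at this
    exact this.2.symm
  rw [hdet, Complex.mul_re, hdim]
  simp [Complex.add_re, Complex.add_im, Complex.mul_re, Complex.mul_im, him]

private lemma det_re_pos' {n : ℕ} {A : Matrix (Fin n) (Fin n) ℂ} (hA : A.PosDef) :
    0 < A.det.re := by
  have := hA.det_pos
  rw [Complex.lt_def] at this
  simpa using this.1

private lemma log_det_inv_re {n : ℕ} {A : Matrix (Fin n) (Fin n) ℂ} (hA : A.PosDef) :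
    Real.log ((A⁻¹).det.re) = - Real.log (A.det.re) := by
  have hdim : A.det.im = 0 := by
    have := hA.det_pos
    rw [Complex.lt_def] at this
    exact this.2.symm
  have h1 : (A⁻¹).det = (A.det)⁻¹ := by
    rw [det_nonsing_inv, Ring.inverse_eq_inv']
  have h2 : A.det = ((A.det.re : ℝ) : ℂ) := by
    apply Complex.ext <;> simp [hdim]
  rw [h1, h2, ← Complex.ofReal_inv]
  simp [Real.log_inv]

theorem d_optimal_supermodular
    {n : ℕ} (hn : 0 < n) {ι : Type*} [DecidableEq ι]
    (P : Matrix (Fin n) (Fin n) ℂ) (hP : P.PosDef)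
    (Ω : Finset ι) (c : ι → (Fin n → ℂ)) (σ : ι → ℝ)
    (hσ : ∀ i ∈ Ω, 0 < σ i)
    (fD : Finset ι → ℝ)
    (hfD : ∀ X : Finset ι,
      fD X = Real.log (((P + ∑ i ∈ X, (σ i : ℂ) • vecMulVec (c i) (star (c i)))⁻¹).det.re))
    (a : ι) (ha : a ∈ Ω)
    (X Y : Finset ι) (hXY : X ⊆ Y) (hY : Y ⊆ Ω \ {a}) :
    fD (insert a Y) - fD Y ≥ fD (insert a X) - fD X := by
  classical
  have hYΩ : Y ⊆ Ω := hY.trans (Finset.sdiff_subset)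
  have hXΩ : X ⊆ Ω := hXY.trans hYΩ
  have haY : a ∉ Y := fun h => (Finset.mem_sdiff.mp (hY h)).2 (Finset.mem_singleton_self a)
  have haX : a ∉ X := fun h => haY (hXY h)
  set f : ι → Matrix (Fin n) (Fin n) ℂ :=
    fun i => (σ i : ℂ) • vecMulVec (c i) (star (c i)) with hf
  -- positive semidefiniteness of partial sums
  have hpsd : ∀ Z : Finset ι, Z ⊆ Ω → (∑ i ∈ Z, f i).PosSemidef := by
    intro Z hZ
    apply Finset.sum_induction f _ (fun A B hA hB => hA.add hB) Matrix.PosSemidef.zero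
    intro i hi
    exact psd_term (c i) (hσ i (hZ hi)).le
  set AX := P + ∑ i ∈ X, f i with hAX
  set AY := P + ∑ i ∈ Y, f i with hAY
  have hAXpd : AX.PosDef := hP.add_posSemidef (hpsd X hXΩ)
  have hAYpd : AY.PosDef := hP.add_posSemidef (hpsd Y hYΩ)
  -- A_Y = A_X + D with D psd
  have hD : (∑ i ∈ Y \ X, f i).PosSemidef := hpsd _ ((Finset.sdiff_subset).trans hYΩ)
  have hAYX : AY = AX + ∑ i ∈ Y \ X, f i := by
    rw [hAY, hAX, ← Finset.sum_sdiff hXY]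
    abel
  -- quadratic forms
  set qX := (star (c a) ⬝ᵥ AX⁻¹ *ᵥ c a).re with hqX
  set qY := (star (c a) ⬝ᵥ AY⁻¹ *ᵥ c a).re with hqY
  have hq : qY ≤ qX := by
    rw [hqX, hqY, hAYX]
    exact quad_anti hAXpd hD (c a)
  have hqX0 : 0 ≤ qX := psd_re_nonneg hAXpd.inv.posSemidef _
  have hqY0 : 0 ≤ qY := psd_re_nonneg hAYpd.inv.posSemidef _
  have hσa : 0 < σ a := hσ a ha
  -- insert sums
  have hinsX : P + ∑ i ∈ insert a X, f i = AX + (σ a : ℂ) • vecMulVec (c a) (star (c a)) := by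
    rw [Finset.sum_insert haX, hAX, hf]
    abel
  have hinsY : P + ∑ i ∈ insert a Y, f i = AY + (σ a : ℂ) • vecMulVec (c a) (star (c a)) := by
    rw [Finset.sum_insert haY, hAY, hf]
    abel
  have hinsXpd : (AX + (σ a : ℂ) • vecMulVec (c a) (star (c a))).PosDef :=
    hAXpd.add_posSemidef (psd_term (c a) hσa.le)
  have hinsYpd : (AY + (σ a : ℂ) • vecMulVec (c a) (star (c a))).PosDef :=
    hAYpd.add_posSemidef (psd_term (c a) hσa.le)
  -- fD values
  have hfX : fD X = - Real.log (AX.det.re) := by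
    rw [hfD X, ← hAX, log_det_inv_re hAXpd]
  have hfY : fD Y = - Real.log (AY.det.re) := by
    rw [hfD Y, ← hAY, log_det_inv_re hAYpd]
  have hfX' : fD (insert a X) = - Real.log (AX.det.re * (1 + σ a * qX)) := by
    rw [hfD (insert a X), hinsX, log_det_inv_re hinsXpd,
      det_re_add_rankone hAXpd (c a) (σ a), ← hqX]
  have hfY' : fD (insert a Y) = - Real.log (AY.det.re * (1 + σ a * qY)) := by
    rw [hfD (insert a Y), hinsY, log_det_inv_re hinsYpd,
      det_re_add_rankone hAYpd (c a) (σ a), ← hqY]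
  have hdX : 0 < AX.det.re := det_re_pos' hAXpd
  have hdY : 0 < AY.det.re := det_re_pos' hAYpd
  have h1X : 0 < 1 + σ a * qX := by nlinarith
  have h1Y : 0 < 1 + σ a * qY := by nlinarith
  rw [hfX, hfY, hfX', hfY', Real.log_mul hdX.ne' h1X.ne', Real.log_mul hdY.ne' h1Y.ne']
  have hlog : Real.log (1 + σ a * qY) ≤ Real.log (1 + σ a * qX) :=
    Real.log_le_log h1Y (by nlinarith)
  linarith
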